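/- arXiv:2203.16808 — 3 statements merged into one kernel-verified Lean document; each statement's English description precedes it below -/
import Mathlib

section
/- Let c : ℝ³ → ℝ be C¹ with a unique critical point p* (∇c(p) = 0 ⟺ p = p*). Suppose (p(t), Q(t)) is a C¹ trajectory of ṗ = Qe₁e₁ᵀQᵀ∇c(p), Q̇ = (1/4)Q((Qᵀ∇c(p))×e₁)^ on ℝ³×SO(3) satisfying ∇c(p(t))ᵀ Q(t)e₁ = 0 for all t in an interval I. Then p(t) = p* for all t ∈ I. -/
open Matrix

attribute [local instance] Matrix.normedAddCommGroup Matrix.normedSpace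

/-- The linear functional `M ↦ g ⬝ᵥ M.mulVec e₁` on matrices. -/
noncomputable def lasalleL (g : Fin 3 → ℝ) :
    Matrix (Fin 3) (Fin 3) ℝ →ₗ[ℝ] ℝ where
  toFun M := g ⬝ᵥ M.mulVec ![1,0,0]
  map_add' M N := by simp [Matrix.add_mulVec, dotProduct_add]
  map_smul' r M := by simp [Matrix.smul_mulVec, dotProduct_smul]

/-- LaSalle invariant-set computation: if a trajectory of
`ṗ = Q e₁e₁ᵀ Qᵀ ∇c(p)`, `Q̇ = (1/4) Q ((Qᵀ∇c(p)) × e₁)^` on `ℝ³ × SO(3)` satisfies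
`∇c(p(t))ᵀ Q(t) e₁ = 0` on an interval `I`, and `c` has a unique critical point `p*`,
then `p(t) = p*` on `I`. -/
theorem lasalle_invariant_set
    (hat : (Fin 3 → ℝ) → Matrix (Fin 3) (Fin 3) ℝ)
    (hhat : ∀ v w : Fin 3 → ℝ, (hat v).mulVec w = v ⨯₃ w)
    (c : (Fin 3 → ℝ) → ℝ) (hc : ContDiff ℝ 1 c)
    (gradc : (Fin 3 → ℝ) → Fin 3 → ℝ)
    (hgrad : ∀ (x v : Fin 3 → ℝ), fderiv ℝ c x v = gradc x ⬝ᵥ v)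
    (pstar : Fin 3 → ℝ) (hcrit : ∀ x : Fin 3 → ℝ, gradc x = 0 ↔ x = pstar)
    (a b : ℝ)
    (p : ℝ → Fin 3 → ℝ) (Q : ℝ → Matrix (Fin 3) (Fin 3) ℝ)
    (hSO : ∀ t ∈ Set.Ioo a b, (Q t)ᵀ * Q t = 1 ∧ (Q t).det = 1)
    (hp : ∀ t ∈ Set.Ioo a b, HasDerivAt p
      ((Q t * vecMulVec (![1,0,0] : Fin 3 → ℝ) (![1,0,0] : Fin 3 → ℝ) * (Q t)ᵀ).mulVec
        (gradc (p t))) t)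
    (hQd : ∀ t ∈ Set.Ioo a b, HasDerivAt Q
      ((1/4 : ℝ) • (Q t * hat (((Q t)ᵀ.mulVec (gradc (p t))) ⨯₃ ![1,0,0]))) t)
    (hinv : ∀ t ∈ Set.Ioo a b, gradc (p t) ⬝ᵥ (Q t).mulVec ![1,0,0] = 0) :
    ∀ t ∈ Set.Ioo a b, p t = pstar := by
  intro t ht
  -- Step 1: ṗ = 0 on the interval
  have hpzero : ∀ s ∈ Set.Ioo a b, HasDerivAt p 0 s := by
    intro s hs
    have h := hp s hs
    have hz : (Q s * vecMulVec (![1,0,0] : Fin 3 → ℝ) (![1,0,0] : Fin 3 → ℝ) * (Q s)ᵀ).mulVec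
        (gradc (p s)) = 0 := by
      have hi := hinv s hs
      simp only [dotProduct, Matrix.mulVec, Fin.sum_univ_three, Matrix.cons_val_zero,
        Matrix.cons_val_one, Matrix.head_cons, Matrix.cons_val_two, Matrix.tail_cons,
        mul_one, mul_zero, add_zero] at hi
      funext i
      simp only [Matrix.mulVec, dotProduct, Matrix.mul_apply, Fin.sum_univ_three,
        vecMulVec_apply, Matrix.transpose_apply, Matrix.cons_val_zero, Matrix.cons_val_one,
        Matrix.head_cons, Matrix.cons_val_two, Matrix.tail_cons, Pi.zero_apply,
        mul_one, mul_zero, zero_mul, one_mul, add_zero, zero_add]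
      linear_combination Q s i 0 * hi
    rwa [hz] at h
  -- Step 2: p is constant on the interval
  have hconst : ∀ s ∈ Set.Ioo a b, p s = p t := by
    intro s hs
    refine (convex_Ioo a b).is_const_of_fderivWithin_eq_zero (𝕜 := ℝ)
      (fun x hx => ((hpzero x hx).differentiableAt.differentiableWithinAt)) ?_ hs ht
    intro x hx
    have hfd : HasFDerivAt p ((1 : ℝ →L[ℝ] ℝ).smulRight (0 : Fin 3 → ℝ)) x :=
      (hpzero x hx).hasFDerivAt
    rw [(hfd.hasFDerivWithinAt).fderivWithin (isOpen_Ioo.uniqueDiffWithinAt hx)]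
    ext y
    simp
  set g := gradc (p t) with hg
  set u := (Q t)ᵀ.mulVec g with hu
  -- Step 3: differentiate s ↦ g ⬝ᵥ (Q s) e₁
  have hQ' := hQd t ht
  have hL : HasDerivAt (fun s => lasalleL g (Q s))
      (lasalleL g ((1/4 : ℝ) • (Q t * hat (u ⨯₃ ![1,0,0])))) t := by
    exact ((lasalleL g).toContinuousLinearMap.hasFDerivAt.comp_hasDerivAt t hQ')
  have hzero : HasDerivAt (fun s => lasalleL g (Q s)) 0 t := by
    have heq : (fun s => lasalleL g (Q s)) =ᶠ[nhds t] fun _ => (0 : ℝ) := by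
      filter_upwards [isOpen_Ioo.mem_nhds ht] with s hs
      have := hinv s hs
      rw [hconst s hs] at this
      simpa [lasalleL] using this
    exact (hasDerivAt_const t (0 : ℝ)).congr_of_eventuallyEq heq
  have hD0 : lasalleL g ((1/4 : ℝ) • (Q t * hat (u ⨯₃ ![1,0,0]))) = 0 :=
    hL.unique hzero
  -- Step 4: compute the derivative value
  have hival := hinv t ht
  have hgQ : ∀ w : Fin 3 → ℝ, g ⬝ᵥ (Q t).mulVec w = u ⬝ᵥ w := by
    intro w
    simp only [hu, Matrix.mulVec, dotProduct, Matrix.transpose_apply, Fin.sum_univ_three]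
    ring
  have hu0 : u 0 = 0 := by
    have h2 : u ⬝ᵥ ![1,0,0] = 0 := (hgQ ![1,0,0]).symm.trans hival
    simpa [dotProduct, Fin.sum_univ_three] using h2
  have hDval : lasalleL g ((1/4 : ℝ) • (Q t * hat (u ⨯₃ ![1,0,0])))
      = -(1/4 : ℝ) * (u 1 ^ 2 + u 2 ^ 2) := by
    have h1 : ((1/4 : ℝ) • (Q t * hat (u ⨯₃ ![1,0,0]))).mulVec ![1,0,0]
        = (1/4 : ℝ) • (Q t).mulVec ((u ⨯₃ ![1,0,0]) ⨯₃ ![1,0,0]) := by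
      rw [Matrix.smul_mulVec, ← Matrix.mulVec_mulVec, hhat]
    simp only [lasalleL, LinearMap.coe_mk, AddHom.coe_mk, h1, dotProduct_smul, hgQ]
    simp only [crossProduct, LinearMap.mk₂_apply, dotProduct, Fin.sum_univ_three,
      Matrix.cons_val_zero, Matrix.cons_val_one, Matrix.head_cons, Matrix.cons_val_two,
      Matrix.tail_cons, smul_eq_mul]
    ring
  rw [hDval] at hD0
  have hu1 : u 1 = 0 := by nlinarith [sq_nonneg (u 1), sq_nonneg (u 2)]
  have hu2 : u 2 = 0 := by nlinarith [sq_nonneg (u 1), sq_nonneg (u 2)]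
  have huz : u = 0 := by
    funext i; fin_cases i <;> assumption
  -- Step 5: g = 0
  have hQQ : Q t * (Q t)ᵀ = 1 := mul_eq_one_comm.mp (hSO t ht).1
  have hgz : g = 0 := by
    have : (Q t).mulVec u = g := by
      rw [hu, Matrix.mulVec_mulVec, hQQ, Matrix.one_mulVec]
    rw [huz, Matrix.mulVec_zero] at this
    exact this.symm
  exact (hcrit (p t)).mp hgz
end

section
/- Let c : ℝ³ → ℝ be C³, radially unbounded, with unique critical point p* which is the global maximum, satisfying c(p*) − c(p) ≤ κ‖∇c(p)‖² for all p and some κ > 0. Then the set S = {p*} × SO(3) is globally asymptotically stable for the system ṗ = Qe₁e₁ᵀQᵀ∇c(p), Q̇ = (1/4)Q((Qᵀ∇c(p))×e₁)^ on ℝ³ × SO(3). -/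
open Matrix Filter

attribute [local instance] Matrix.normedAddCommGroup Matrix.normedSpace

/-- Solutions (for `t ≥ 0`) of the reduced order averaged source-seeking system
`ṗ = Q e₁e₁ᵀ Qᵀ ∇c(p)`, `Q̇ = (1/4) Q ((Qᵀ∇c(p)) × e₁)^` starting on `ℝ³ × SO(3)`. -/
def IsAvgSolution (hat : (Fin 3 → ℝ) → Matrix (Fin 3) (Fin 3) ℝ)
    (gradc : (Fin 3 → ℝ) → Fin 3 → ℝ)
    (p : ℝ → Fin 3 → ℝ) (Q : ℝ → Matrix (Fin 3) (Fin 3) ℝ) : Prop :=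
  ((Q 0)ᵀ * Q 0 = 1 ∧ (Q 0).det = 1) ∧
  (∀ t : ℝ, 0 ≤ t → HasDerivAt p
      ((Q t * vecMulVec (![1,0,0] : Fin 3 → ℝ) (![1,0,0] : Fin 3 → ℝ) * (Q t)ᵀ).mulVec
        (gradc (p t))) t) ∧
  (∀ t : ℝ, 0 ≤ t → HasDerivAt Q
      ((1/4 : ℝ) • (Q t * hat (((Q t)ᵀ.mulVec (gradc (p t))) ⨯₃ ![1,0,0]))) t)

section aux
variable (hat : (Fin 3 → ℝ) → Matrix (Fin 3) (Fin 3) ℝ)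
  (hhat : ∀ v w : Fin 3 → ℝ, (hat v).mulVec w = v ⨯₃ w)

include hhat in
lemma hat_entry (v : Fin 3 → ℝ) (i j : Fin 3) :
    hat v i j = (v ⨯₃ Pi.single j 1) i := by
  have := congrFun (hhat v (Pi.single j 1)) i
  simpa using this

include hhat in
lemma hat_explicit (v : Fin 3 → ℝ) :
    hat v = !![0, -v 2, v 1; v 2, 0, -v 0; -v 1, v 0, 0] := by
  ext i j
  rw [hat_entry hat hhat]
  fin_cases i <;> fin_cases j <;>
    simp [cross_apply, Pi.single_apply]

include hhat in
lemma hat_skew (v : Fin 3 → ℝ) : (hat v)ᵀ = -(hat v) := by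
  rw [hat_explicit hat hhat]
  ext i j
  fin_cases i <;> fin_cases j <;> simp

lemma pderiv_eq (Q : Matrix (Fin 3) (Fin 3) ℝ) (g : Fin 3 → ℝ) :
    (Q * vecMulVec (![1,0,0] : Fin 3 → ℝ) (![1,0,0] : Fin 3 → ℝ) * Qᵀ).mulVec g
      = (g ⬝ᵥ (fun i => Q i 0)) • (fun i => Q i 0) := by
  funext j
  simp [mulVec, dotProduct, Matrix.mul_apply, vecMulVec_apply, transpose_apply,
    Fin.sum_univ_three]
  ring

include hhat in
lemma QhatCol (Q : Matrix (Fin 3) (Fin 3) ℝ) (g : Fin 3 → ℝ) (hQ : Q * Qᵀ = 1) :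
    (fun i => (Q * hat ((Qᵀ.mulVec g) ⨯₃ ![1,0,0])) i 0)
       = (g ⬝ᵥ (fun i => Q i 0)) • (fun i => Q i 0) - g := by
  have h1 : Q.mulVec (Qᵀ.mulVec g) = g := by rw [mulVec_mulVec, hQ, one_mulVec]
  funext i
  have h1i := congrFun h1 i
  simp [hat_explicit hat hhat, mulVec, dotProduct, Matrix.mul_apply, transpose_apply,
    cross_apply, Fin.sum_univ_three] at h1i ⊢
  linear_combination -h1i
end aux


section part3
open Set
lemma norm_matmul_le3 (X Y : Matrix (Fin 3) (Fin 3) ℝ) : ‖X * Y‖ ≤ 3 * ‖X‖ * ‖Y‖ := by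
  rw [Matrix.norm_le_iff (by positivity)]
  intro i j
  calc ‖(X * Y) i j‖ = ‖∑ k, X i k * Y k j‖ := by rw [Matrix.mul_apply]
    _ ≤ ∑ k, ‖X i k * Y k j‖ := norm_sum_le _ _
    _ ≤ ∑ _k : Fin 3, ‖X‖ * ‖Y‖ := by
        refine Finset.sum_le_sum fun k _ => ?_
        rw [norm_mul]
        exact mul_le_mul (Matrix.norm_entry_le_entrywise_sup_norm X)
          (Matrix.norm_entry_le_entrywise_sup_norm Y) (norm_nonneg _) (norm_nonneg _)
    _ = 3 * ‖X‖ * ‖Y‖ := by simp [Fin.sum_univ_three]; ring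

lemma hasDerivAt_transpose_mul_self (Q : ℝ → Matrix (Fin 3) (Fin 3) ℝ)
    (M : Matrix (Fin 3) (Fin 3) ℝ) (t : ℝ) (h : HasDerivAt Q M t) :
    HasDerivAt (fun τ => (Q τ)ᵀ * Q τ) (Mᵀ * Q t + (Q t)ᵀ * M) t := by
  refine hasDerivAt_pi.2 fun i => ?_
  rw [hasDerivAt_pi]; intro j
  have key : HasDerivAt (fun τ => ∑ k, Q τ k i * Q τ k j)
      (∑ k, (M k i * Q t k j + Q t k i * M k j)) t :=
    HasDerivAt.fun_sum fun k _ =>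
      (hasDerivAt_pi.1 (hasDerivAt_pi.1 h k) i).mul (hasDerivAt_pi.1 (hasDerivAt_pi.1 h k) j)
  convert key using 2 with τ
  all_goals first | rfl | simp [Matrix.mul_apply, transpose_apply, ← Finset.sum_add_distrib]

lemma orth_invariant (S : ℝ → Matrix (Fin 3) (Fin 3) ℝ)
    (hScont : ContinuousOn S (Ici (0:ℝ)))
    (hSskew : ∀ t, 0 ≤ t → (S t)ᵀ = -(S t))
    (Q : ℝ → Matrix (Fin 3) (Fin 3) ℝ)
    (hQ0 : (Q 0)ᵀ * Q 0 = 1)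
    (hQd : ∀ t, 0 ≤ t → HasDerivAt Q ((1/4 : ℝ) • (Q t * S t)) t) :
    ∀ t, 0 ≤ t → (Q t)ᵀ * Q t = 1 := by
  intro T hT
  set cl : ℝ → ℝ := fun τ => min (max τ 0) T with hcl
  have hclmem : ∀ τ, cl τ ∈ Icc (0:ℝ) T := fun τ =>
    ⟨le_min (le_max_right _ _) hT, min_le_right _ _⟩
  have hclself : ∀ τ ∈ Icc (0:ℝ) T, cl τ = τ := by
    intro τ hτ; simp [hcl, max_eq_left hτ.1, min_eq_left hτ.2]
  set A : ℝ → Matrix (Fin 3) (Fin 3) ℝ := fun τ => S (cl τ) with hA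
  obtain ⟨τ₀, hτ₀, hτ₀max⟩ := isCompact_Icc.exists_isMaxOn (nonempty_Icc.2 hT)
      ((hScont.mono Icc_subset_Ici_self).norm)
  set B : ℝ := ‖S τ₀‖ with hB
  have hBnn : 0 ≤ B := norm_nonneg _
  have hAB : ∀ τ, ‖A τ‖ ≤ B := fun τ => hτ₀max (hclmem τ)
  set K : NNReal := ⟨2 * B, by positivity⟩ with hK
  set v : ℝ → Matrix (Fin 3) (Fin 3) ℝ → Matrix (Fin 3) (Fin 3) ℝ :=
    fun τ X => (1/4 : ℝ) • (X * A τ - A τ * X) with hv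
  have hLip : ∀ τ, LipschitzWith K (v τ) := by
    intro τ
    apply LipschitzWith.of_dist_le_mul
    intro X Y
    rw [dist_eq_norm, dist_eq_norm]
    have hdiff : v τ X - v τ Y = (1/4 : ℝ) • ((X - Y) * A τ - A τ * (X - Y)) := by
      simp only [hv, Matrix.sub_mul, Matrix.mul_sub, ← smul_sub]
      congr 1; abel
    rw [hdiff, norm_smul]
    have h1 : ‖(X - Y) * A τ - A τ * (X - Y)‖ ≤ 6 * B * ‖X - Y‖ := by
      calc ‖(X - Y) * A τ - A τ * (X - Y)‖
          ≤ ‖(X - Y) * A τ‖ + ‖A τ * (X - Y)‖ := norm_sub_le _ _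
        _ ≤ 3 * ‖X - Y‖ * ‖A τ‖ + 3 * ‖A τ‖ * ‖X - Y‖ :=
            add_le_add (norm_matmul_le3 _ _) (norm_matmul_le3 _ _)
        _ ≤ 6 * B * ‖X - Y‖ := by nlinarith [hAB τ, norm_nonneg (X - Y), norm_nonneg (A τ)]
    have : ‖(1/4 : ℝ)‖ = (1/4 : ℝ) := by norm_num
    rw [this]
    have hKc : (K : ℝ) = 2 * B := rfl
    nlinarith [norm_nonneg (X - Y)]
  have hval : ∀ τ, 0 ≤ τ →
      ((1/4 : ℝ) • (Q τ * S τ))ᵀ * Q τ + (Q τ)ᵀ * ((1/4 : ℝ) • (Q τ * S τ))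
        = (1/4 : ℝ) • (((Q τ)ᵀ * Q τ) * S τ - S τ * ((Q τ)ᵀ * Q τ)) := by
    intro τ hτ
    rw [Matrix.transpose_smul, Matrix.transpose_mul, hSskew τ hτ]
    rw [Matrix.smul_mul, Matrix.mul_smul, ← smul_add]
    congr 1
    rw [Matrix.neg_mul, Matrix.mul_assoc, Matrix.neg_mul, Matrix.mul_assoc, sub_eq_add_neg]
    abel
  have hfd : ∀ τ ∈ Ico (0:ℝ) T,
      HasDerivWithinAt (fun τ => (Q τ)ᵀ * Q τ)
        (v τ ((fun τ => (Q τ)ᵀ * Q τ) τ)) (Ici τ) τ := by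
    intro τ hτ
    have hd := hasDerivAt_transpose_mul_self Q _ τ (hQd τ hτ.1)
    rw [hval τ hτ.1] at hd
    have : v τ ((Q τ)ᵀ * Q τ)
        = (1/4 : ℝ) • (((Q τ)ᵀ * Q τ) * S τ - S τ * ((Q τ)ᵀ * Q τ)) := by
      rw [hv]; simp only [hA, hclself τ (Ico_subset_Icc_self hτ)]
    rw [this]
    exact hd.hasDerivWithinAt
  have hgd : ∀ τ ∈ Ico (0:ℝ) T,
      HasDerivWithinAt (fun _ : ℝ => (1 : Matrix (Fin 3) (Fin 3) ℝ))
        (v τ 1) (Ici τ) τ := by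
    intro τ hτ
    have : v τ 1 = 0 := by simp [hv]
    rw [this]
    exact (hasDerivAt_const τ _).hasDerivWithinAt
  have hfc : ContinuousOn (fun τ => (Q τ)ᵀ * Q τ) (Icc (0:ℝ) T) := by
    apply continuousOn_of_forall_continuousAt
    intro τ hτ
    exact (hasDerivAt_transpose_mul_self Q _ τ (hQd τ hτ.1)).continuousAt
  have := ODE_solution_unique hLip hfc hfd (continuousOn_const) hgd (by simpa using hQ0)
  simpa using this ⟨hT, le_refl T⟩

end part3

section part4
open Set
lemma compact_sublevel {V : (Fin 3 → ℝ) → ℝ} (hVc : Continuous V)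
    (hradial : Tendsto V (cocompact (Fin 3 → ℝ)) atTop) (C : ℝ) :
    IsCompact {x | V x ≤ C} := by
  have h1 : ∀ᶠ x in cocompact (Fin 3 → ℝ), C < V x := hradial.eventually (eventually_gt_atTop C)
  obtain ⟨K, hK, hKsub⟩ := mem_cocompact.1 h1
  refine hK.of_isClosed_subset (isClosed_le hVc continuous_const) ?_
  intro x hx
  by_contra hxK
  exact absurd (hKsub hxK) (by simpa using hx)

lemma decay_lemma {f d : ℝ → ℝ} {s t m : ℝ} (hst : s ≤ t)
    (hf : ∀ τ ∈ Icc s t, HasDerivAt f (d τ) τ)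
    (hm : ∀ τ ∈ Icc s t, d τ ≤ -m) : f t ≤ f s - m * (t - s) := by
  have hD : ∀ x ∈ Ioo s t, HasDerivAt (fun τ => f τ + m * τ) (d x + m) x := by
    intro x hx
    exact (hf x (Ioo_subset_Icc_self hx)).add (by simpa using (hasDerivAt_id x).const_mul m)
  have key : AntitoneOn (fun τ => f τ + m * τ) (Icc s t) := by
    apply antitoneOn_of_deriv_nonpos (convex_Icc s t)
    · exact ContinuousOn.add
        (continuousOn_of_forall_continuousAt fun τ hτ => (hf τ hτ).continuousAt)
        (continuous_const.mul continuous_id).continuousOn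
    · intro x hx
      rw [interior_Icc] at hx
      exact (hD x hx).differentiableAt.differentiableWithinAt
    · intro x hx
      rw [interior_Icc] at hx
      rw [(hD x hx).deriv]
      linarith [hm x (Ioo_subset_Icc_self hx)]
  have := key (left_mem_Icc.2 hst) (right_mem_Icc.2 hst) hst
  simp only at this
  linarith

lemma barrier_lemma {f d : ℝ → ℝ} {t₀ b : ℝ}
    (hf : ∀ t, t₀ ≤ t → HasDerivAt f (d t) t)
    (hd : ∀ t, t₀ ≤ t → f t = b → d t < 0)
    (h0 : f t₀ ≤ b) : ∀ t, t₀ ≤ t → f t ≤ b := by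
  intro t₁ ht₁
  by_contra hgt
  push_neg at hgt
  have ht01 : t₀ < t₁ := by
    rcases eq_or_lt_of_le ht₁ with h | h
    · exact absurd (h ▸ h0) (not_le.2 hgt)
    · exact h
  set A : Set ℝ := {s | s ∈ Icc t₀ t₁ ∧ f s ≤ b} with hA
  have hAne : A.Nonempty := ⟨t₀, ⟨left_mem_Icc.2 ht₁, h0⟩⟩
  have hAbdd : BddAbove A := ⟨t₁, fun x hx => hx.1.2⟩
  set s₀ : ℝ := sSup A with hs₀
  have hs₀mem : s₀ ∈ Icc t₀ t₁ :=
    ⟨le_csSup hAbdd ⟨left_mem_Icc.2 ht₁, h0⟩, csSup_le hAne fun x hx => hx.1.2⟩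
  have hcont : ContinuousAt f s₀ := (hf s₀ hs₀mem.1).continuousAt
  have hfs₀_le : f s₀ ≤ b := by
    by_contra hlt
    push_neg at hlt
    have hev : ∀ᶠ s in nhds s₀, b < f s := hcont.eventually (eventually_gt_nhds hlt)
    obtain ⟨δ, hδ, hball⟩ := Metric.eventually_nhds_iff.1 hev
    obtain ⟨a, haA, ha⟩ := exists_lt_of_lt_csSup hAne (by linarith : s₀ - δ < s₀)
    have haup : a ≤ s₀ := le_csSup hAbdd haA
    have : b < f a := hball (by rw [Real.dist_eq]; rw [abs_lt]; constructor <;> linarith)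
    exact absurd haA.2 (not_le.2 this)
  have hs₀t₁ : s₀ < t₁ := lt_of_le_of_ne hs₀mem.2
    (fun h => absurd (h ▸ hfs₀_le) (not_le.2 hgt))
  have hright : ∀ s, s ∈ Ioc s₀ t₁ → b < f s := by
    intro s hs
    by_contra hsb
    push_neg at hsb
    have : s ∈ A := ⟨⟨le_trans hs₀mem.1 hs.1.le, hs.2⟩, hsb⟩
    exact absurd (le_csSup hAbdd this) (not_le.2 hs.1)
  have hfs₀ : f s₀ = b := by
    rcases eq_or_lt_of_le hfs₀_le with h | h
    · exact h
    · exfalso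
      have hev : ∀ᶠ s in nhds s₀, f s < b := hcont.eventually (eventually_lt_nhds h)
      obtain ⟨δ, hδ, hball⟩ := Metric.eventually_nhds_iff.1 hev
      set s := min (s₀ + δ/2) ((s₀ + t₁)/2) with hs
      have hs1 : s₀ < s := by apply lt_min <;> [linarith; linarith]
      have hs2 : s ≤ t₁ := le_trans (min_le_right _ _) (by linarith)
      have hs3 : dist s s₀ < δ := by
        rw [Real.dist_eq, abs_lt]
        have : s ≤ s₀ + δ/2 := min_le_left _ _
        constructor <;> linarith
      exact absurd (hball hs3) (not_lt.2 (hright s ⟨hs1, hs2⟩).le)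
  have hdneg : d s₀ < 0 := hd s₀ hs₀mem.1 hfs₀
  have hslope : Tendsto (slope f s₀) (nhdsWithin s₀ (Ioi s₀)) (nhds (d s₀)) :=
    ((hasDerivAt_iff_tendsto_slope.1 (hf s₀ hs₀mem.1)).mono_left
      (nhdsWithin_mono s₀ (fun x hx => ne_of_gt hx)))
  have hev : ∀ᶠ s in nhdsWithin s₀ (Ioi s₀), 0 ≤ slope f s₀ s := by
    filter_upwards [Ioc_mem_nhdsGT_of_mem ⟨le_refl s₀, hs₀t₁⟩] with s hs
    rw [slope_def_field]
    have h1 : b < f s := hright s hs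
    have h2 : s₀ < s := hs.1
    rw [div_eq_mul_inv]
    apply mul_nonneg (by rw [hfs₀]; linarith) (inv_nonneg.2 (by linarith))
  have : 0 ≤ d s₀ := ge_of_tendsto hslope hev
  linarith

end part4

section gradc
variable {c : (Fin 3 → ℝ) → ℝ} {gradc : (Fin 3 → ℝ) → Fin 3 → ℝ}

lemma gradc_eq (hc : ContDiff ℝ 3 c)
    (hgrad : ∀ (x v : Fin 3 → ℝ), fderiv ℝ c x v = gradc x ⬝ᵥ v) :
    gradc = fun x i => fderiv ℝ c x (Pi.single i 1) := by
  funext x i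
  rw [hgrad x (Pi.single i 1)]
  simp [dotProduct, Pi.single_apply]

lemma gradc_contDiff (hc : ContDiff ℝ 3 c)
    (hgrad : ∀ (x v : Fin 3 → ℝ), fderiv ℝ c x v = gradc x ⬝ᵥ v) :
    ContDiff ℝ 2 gradc := by
  rw [gradc_eq hc hgrad]
  have h2 : ContDiff ℝ 2 (fderiv ℝ c) := hc.fderiv_right (by norm_num)
  refine contDiff_pi.2 fun i => ?_
  have := ((ContinuousLinearMap.apply ℝ ℝ (Pi.single i 1)).contDiff (n := 2)).comp h2
  exact this

end gradc
-- solution facts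
open Set

section sol
variable {hat : (Fin 3 → ℝ) → Matrix (Fin 3) (Fin 3) ℝ}
  {gradc : (Fin 3 → ℝ) → Fin 3 → ℝ}
  {p : ℝ → Fin 3 → ℝ} {Q : ℝ → Matrix (Fin 3) (Fin 3) ℝ}
  (hhat : ∀ v w : Fin 3 → ℝ, (hat v).mulVec w = v ⨯₃ w)
  (hsol : IsAvgSolution hat gradc p Q)
  (hgcont : Continuous gradc)

/-- the first column of Q -/
def uvec (Q : ℝ → Matrix (Fin 3) (Fin 3) ℝ) (t : ℝ) : Fin 3 → ℝ := fun i => Q t i 0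

/-- gradient dotted with first column -/
def aval (gradc : (Fin 3 → ℝ) → Fin 3 → ℝ) (p : ℝ → Fin 3 → ℝ)
    (Q : ℝ → Matrix (Fin 3) (Fin 3) ℝ) (t : ℝ) : ℝ := gradc (p t) ⬝ᵥ uvec Q t

include hsol in
lemma p_hasDeriv : ∀ t, 0 ≤ t → HasDerivAt p (aval gradc p Q t • uvec Q t) t := by
  intro t ht
  have h := hsol.2.1 t ht
  rwa [pderiv_eq] at h

include hhat hsol hgcont in
lemma Qorth : ∀ t, 0 ≤ t → (Q t)ᵀ * Q t = 1 := by
  have hpc : ContinuousOn p (Ici 0) :=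
    fun t ht => ((hsol.2.1 t ht).continuousAt).continuousWithinAt
  have hQc : ContinuousOn Q (Ici 0) :=
    fun t ht => ((hsol.2.2 t ht).continuousAt).continuousWithinAt
  have hQent : ∀ i j, ContinuousOn (fun t => Q t i j) (Ici (0:ℝ)) := fun i j =>
    continuousOn_pi.1 (continuousOn_pi.1 hQc i) j
  have hgent : ∀ i, ContinuousOn (fun t => gradc (p t) i) (Ici (0:ℝ)) := fun i =>
    continuousOn_pi.1 (hgcont.comp_continuousOn hpc) i
  have hξent : ∀ k, ContinuousOn (fun t => ((Q t)ᵀ.mulVec (gradc (p t))) k) (Ici (0:ℝ)) := by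
    intro k
    have heq : (fun t => ((Q t)ᵀ.mulVec (gradc (p t))) k)
        = fun t => ∑ m, Q t m k * gradc (p t) m := by
      funext t; simp [Matrix.mulVec, dotProduct, Matrix.transpose_apply]
    rw [heq]
    exact continuousOn_finset_sum _ fun m _ => (hQent m k).mul (hgent m)
  apply orth_invariant (fun t => hat (((Q t)ᵀ.mulVec (gradc (p t))) ⨯₃ ![1,0,0]))
    ?_ (fun t _ => hat_skew hat hhat _) Q hsol.1.1 hsol.2.2
  have hform : (fun t => hat (((Q t)ᵀ.mulVec (gradc (p t))) ⨯₃ ![1,0,0]))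
      = fun t => !![0, -((((Q t)ᵀ.mulVec (gradc (p t))) ⨯₃ ![1,0,0]) 2),
          (((Q t)ᵀ.mulVec (gradc (p t))) ⨯₃ ![1,0,0]) 1;
          (((Q t)ᵀ.mulVec (gradc (p t))) ⨯₃ ![1,0,0]) 2, 0,
          -((((Q t)ᵀ.mulVec (gradc (p t))) ⨯₃ ![1,0,0]) 0);
          -((((Q t)ᵀ.mulVec (gradc (p t))) ⨯₃ ![1,0,0]) 1),
          (((Q t)ᵀ.mulVec (gradc (p t))) ⨯₃ ![1,0,0]) 0, 0] := by
    funext t; exact hat_explicit hat hhat _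
  rw [hform]
  refine continuousOn_pi.2 fun i => continuousOn_pi.2 fun j => ?_
  fin_cases i <;> fin_cases j <;>
    simp [cross_apply] <;>
    first
      | exact continuousOn_const
      | exact hξent _
      | exact (hξent _).neg
      | exact ((hξent _).neg)

include hhat hsol hgcont in
lemma u_hasDeriv : ∀ t, 0 ≤ t → HasDerivAt (uvec Q)
    ((1/4 : ℝ) • (aval gradc p Q t • uvec Q t - gradc (p t))) t := by
  intro t ht
  have hQQt : Q t * (Q t)ᵀ = 1 := mul_eq_one_comm.1 (Qorth hhat hsol hgcont t ht)
  have hcol := QhatCol hat hhat (Q t) (gradc (p t)) hQQt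
  rw [hasDerivAt_pi]
  intro i
  have hD := hasDerivAt_pi.1 (hasDerivAt_pi.1 (hsol.2.2 t ht) i) 0
  convert hD using 1
  have hci' : (Q t * hat (((Q t)ᵀ.mulVec (gradc (p t))) ⨯₃ ![1,0,0])) i 0
      = aval gradc p Q t * uvec Q t i - gradc (p t) i := by
    exact congrFun hcol i
  · rfl
  · simp only [Pi.smul_apply, Pi.sub_apply, Matrix.smul_apply, smul_eq_mul]
    exact congrArg _ (congrFun hcol i).symm

section withc
variable {c : (Fin 3 → ℝ) → ℝ} {pstar : Fin 3 → ℝ}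
  (hc : ContDiff ℝ 3 c)
  (hgrad : ∀ (x v : Fin 3 → ℝ), fderiv ℝ c x v = gradc x ⬝ᵥ v)

include hc hgrad hsol in
lemma V_hasDeriv : ∀ t, 0 ≤ t →
    HasDerivAt (fun τ => c pstar - c (p τ)) (-(aval gradc p Q t)^2) t := by
  intro t ht
  have hp := p_hasDeriv hsol t ht
  have hcd : HasFDerivAt c (fderiv ℝ c (p t)) (p t) :=
    ((hc.differentiable (by norm_num)) (p t)).hasFDerivAt
  have h1 : HasDerivAt (fun τ => c (p τ))
      ((fderiv ℝ c (p t)) (aval gradc p Q t • uvec Q t)) t := hcd.comp_hasDerivAt t hp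
  have h2 : (fderiv ℝ c (p t)) (aval gradc p Q t • uvec Q t) = (aval gradc p Q t)^2 := by
    rw [hgrad]
    simp only [aval, dotProduct, Pi.smul_apply, smul_eq_mul, Fin.sum_univ_three]
    ring
  rw [h2] at h1
  simpa using (hasDerivAt_const t (c pstar)).fun_sub h1

include hc hgrad hsol in
lemma V_antitone : ∀ s t, 0 ≤ s → s ≤ t →
    c pstar - c (p t) ≤ c pstar - c (p s) := by
  intro s t hs hst
  have hdec := decay_lemma (f := fun τ => c pstar - c (p τ))
    (d := fun τ => -(aval gradc p Q τ)^2) (m := 0) hst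
    (fun τ hτ => V_hasDeriv hsol hc hgrad τ (le_trans hs hτ.1))
    (fun τ _ => by simpa using neg_le_neg (sq_nonneg (aval gradc p Q τ)))
  simpa using hdec

include hsol in
lemma g_hasDeriv (hgc2 : ContDiff ℝ 2 gradc) : ∀ t, 0 ≤ t →
    HasDerivAt (fun τ => gradc (p τ))
      ((fderiv ℝ gradc (p t)) (aval gradc p Q t • uvec Q t)) t :=
  fun t ht => (((hgc2.differentiable (by norm_num)) (p t)).hasFDerivAt).comp_hasDerivAt t
    (p_hasDeriv hsol t ht)

include hhat hsol hgcont in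
lemma a_hasDeriv (hgc2 : ContDiff ℝ 2 gradc) : ∀ t, 0 ≤ t →
    HasDerivAt (aval gradc p Q)
      (aval gradc p Q t * ((fderiv ℝ gradc (p t)) (uvec Q t) ⬝ᵥ uvec Q t)
        + (1/4) * ((aval gradc p Q t)^2 - gradc (p t) ⬝ᵥ gradc (p t))) t := by
  intro t ht
  have hg := g_hasDeriv hsol hgc2 t ht
  have hu := u_hasDeriv hhat hsol hgcont t ht
  have key : HasDerivAt (fun τ => ∑ i, gradc (p τ) i * uvec Q τ i)
      (∑ i, (((fderiv ℝ gradc (p t)) (aval gradc p Q t • uvec Q t)) i * uvec Q t i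
        + gradc (p t) i * (((1/4 : ℝ) • (aval gradc p Q t • uvec Q t - gradc (p t))) i))) t :=
    HasDerivAt.fun_sum fun i _ => (hasDerivAt_pi.1 hg i).mul (hasDerivAt_pi.1 hu i)
  have hfun : aval gradc p Q = fun τ => ∑ i, gradc (p τ) i * uvec Q τ i := by
    funext τ; rfl
  rw [← hfun] at key
  convert key using 1
  rw [(fderiv ℝ gradc (p t)).map_smul]
  set A := aval gradc p Q t with hA
  have hsum : A = gradc (p t) 0 * uvec Q t 0 + gradc (p t) 1 * uvec Q t 1
      + gradc (p t) 2 * uvec Q t 2 := by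
    rw [hA]; simp [aval, dotProduct, Fin.sum_univ_three]
  simp only [dotProduct, Pi.smul_apply, smul_eq_mul, Pi.sub_apply, Fin.sum_univ_three]
  linear_combination (A * (1/4)) * hsum

end withc

end sol
open Set in

open Set

set_option maxHeartbeats 1000000 in
/-- Global asymptotic stability of `S = {p*} × SO(3)` for the reduced order averaged
system: Lyapunov stability of the `p`-component about `p*`, and global attractivity
`p(t) → p*`. -/
theorem source_seeking_global_asymptotic_stability
    (hat : (Fin 3 → ℝ) → Matrix (Fin 3) (Fin 3) ℝ)
    (hhat : ∀ v w : Fin 3 → ℝ, (hat v).mulVec w = v ⨯₃ w)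
    (c : (Fin 3 → ℝ) → ℝ) (hc : ContDiff ℝ 3 c)
    (gradc : (Fin 3 → ℝ) → Fin 3 → ℝ)
    (hgrad : ∀ (x v : Fin 3 → ℝ), fderiv ℝ c x v = gradc x ⬝ᵥ v)
    (pstar : Fin 3 → ℝ)
    (hcrit : ∀ x : Fin 3 → ℝ, gradc x = 0 ↔ x = pstar)
    (hmax : ∀ x : Fin 3 → ℝ, c x ≤ c pstar)
    (hradial : Tendsto (fun x => c pstar - c x) (cocompact (Fin 3 → ℝ)) atTop)
    (κ : ℝ) (hκ : 0 < κ)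
    (hPL : ∀ x : Fin 3 → ℝ, c pstar - c x ≤ κ * (gradc x ⬝ᵥ gradc x)) :
    (∀ ε : ℝ, 0 < ε → ∃ δ : ℝ, 0 < δ ∧
      ∀ (p : ℝ → Fin 3 → ℝ) (Q : ℝ → Matrix (Fin 3) (Fin 3) ℝ),
        IsAvgSolution hat gradc p Q → ‖p 0 - pstar‖ < δ →
          ∀ t : ℝ, 0 ≤ t → ‖p t - pstar‖ < ε) ∧
    (∀ (p : ℝ → Fin 3 → ℝ) (Q : ℝ → Matrix (Fin 3) (Fin 3) ℝ),
      IsAvgSolution hat gradc p Q → Tendsto p atTop (nhds pstar)) := by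
  classical
  have hWc : Continuous (fun x => c pstar - c x) := continuous_const.sub hc.continuous
  have hWnonneg : ∀ x : Fin 3 → ℝ, 0 ≤ c pstar - c x := fun x => sub_nonneg.2 (hmax x)
  have hWzero : ∀ x : Fin 3 → ℝ, c pstar - c x = 0 → x = pstar := by
    intro x hx
    have hcx : c x = c pstar := by linarith
    have hmaxx : IsLocalMax c x :=
      Filter.Eventually.of_forall (fun y => by rw [hcx]; exact hmax y)
    have h0 : fderiv ℝ c x = 0 := hmaxx.fderiv_eq_zero
    have hg0 : gradc x = 0 := by
      funext i
      have hgi := hgrad x (Pi.single i 1)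
      rw [h0] at hgi
      simp only [ContinuousLinearMap.zero_apply] at hgi
      have : gradc x ⬝ᵥ Pi.single i 1 = gradc x i := by
        simp [dotProduct, Pi.single_apply]
      rw [this] at hgi
      exact hgi.symm
    exact (hcrit x).1 hg0
  have hgc2 : ContDiff ℝ 2 gradc := gradc_contDiff hc hgrad
  have hgcont : Continuous gradc := hgc2.continuous
  constructor
  · -- Lyapunov stability
    intro ε hε
    have hM1 : IsCompact {x : Fin 3 → ℝ | c pstar - c x ≤ 1} := compact_sublevel hWc hradial 1
    obtain ⟨m', hm'pos, hm'le, hm'ball⟩ :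
        ∃ m' : ℝ, 0 < m' ∧ m' ≤ 1 ∧ ∀ x, c pstar - c x ≤ m' → dist x pstar < ε := by
      by_cases hne : ({x : Fin 3 → ℝ | c pstar - c x ≤ 1}
          ∩ {x | ε ≤ dist x pstar}).Nonempty
      · obtain ⟨x₀, hx₀mem, hx₀min⟩ :=
          (hM1.inter_right (isClosed_le continuous_const
            (continuous_id.dist continuous_const))).exists_isMinOn hne hWc.continuousOn
        have hmpos : 0 < c pstar - c x₀ := by
          rcases (hWnonneg x₀).lt_or_eq with h | h
          · exact h
          · exfalso
            have hx := hWzero x₀ h.symm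
            have := hx₀mem.2
            rw [hx] at this
            simp only [mem_setOf_eq, id_eq, dist_self] at this
            linarith
        refine ⟨min (c pstar - c x₀) 1 / 2, by positivity,
          by have := min_le_right (c pstar - c x₀) 1; linarith, ?_⟩
        intro x hx
        by_contra hdist
        push_neg at hdist
        have hmin1 : min (c pstar - c x₀) 1 ≤ 1 := min_le_right _ _
        have hx1 : c pstar - c x ≤ 1 := by linarith
        have hge : c pstar - c x₀ ≤ c pstar - c x := hx₀min ⟨hx1, hdist⟩
        have hmin2 : min (c pstar - c x₀) 1 ≤ c pstar - c x₀ := min_le_left _ _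
        have hminpos : 0 < min (c pstar - c x₀) 1 := lt_min hmpos one_pos
        linarith
      · refine ⟨1/2, by norm_num, by norm_num, ?_⟩
        intro x hx
        by_contra hdist
        push_neg at hdist
        exact hne ⟨x, by constructor; · simp only [mem_setOf_eq]; linarith
                         · exact hdist⟩
    obtain ⟨δ, hδpos, hδ⟩ := Metric.continuousAt_iff.1 hWc.continuousAt m' hm'pos
    refine ⟨δ, hδpos, ?_⟩
    intro p Q hsol hinit t ht
    have hV0 : c pstar - c (p 0) < m' := by
      have h1 := hδ (show dist (p 0) pstar < δ by rwa [dist_eq_norm])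
      rw [Real.dist_eq] at h1
      simp only [sub_self, sub_zero] at h1
      calc c pstar - c (p 0) ≤ |c pstar - c (p 0)| := le_abs_self _
        _ < m' := h1
    have hVt : c pstar - c (p t) ≤ c pstar - c (p 0) :=
      V_antitone hsol hc hgrad 0 t le_rfl ht
    have := hm'ball (p t) (by linarith)
    rwa [dist_eq_norm] at this
  · -- global attractivity
    intro p Q hsol
    have hVd := V_hasDeriv (pstar := pstar) hsol hc hgrad
    have hVmono := V_antitone (pstar := pstar) hsol hc hgrad
    have hVnn : ∀ t : ℝ, 0 ≤ c pstar - c (p t) := fun t => hWnonneg _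
    set Vf : ℝ → ℝ := fun t => c pstar - c (p t) with hVf
    set Af : ℝ → ℝ := aval gradc p Q with hAf
    have hVnn' : ∀ t : ℝ, 0 ≤ Vf t := fun t => hVnn t
    set df : ℝ → ℝ := fun t => Af t * ((fderiv ℝ gradc (p t)) (uvec Q t) ⬝ᵥ uvec Q t)
        + (1/4) * ((Af t)^2 - gradc (p t) ⬝ᵥ gradc (p t)) with hdf
    have hAd : ∀ t, 0 ≤ t → HasDerivAt Af (df t) t :=
      fun t ht => a_hasDeriv hhat hsol hgcont hgc2 t ht
    have hbdd : BddBelow (Vf '' Ici 0) := ⟨0, fun y ⟨t, _, hty⟩ => hty ▸ hVnn t⟩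
    have hne : (Vf '' Ici 0).Nonempty := ⟨Vf 0, 0, self_mem_Ici, rfl⟩
    set L := sInf (Vf '' Ici 0) with hL
    have hLle : ∀ t, 0 ≤ t → L ≤ Vf t := fun t ht => csInf_le hbdd ⟨t, ht, rfl⟩
    have hL0 : 0 ≤ L := le_csInf hne (fun y ⟨t, _, hty⟩ => hty ▸ hVnn t)
    have hK : IsCompact {x : Fin 3 → ℝ | c pstar - c x ≤ Vf 0} :=
      compact_sublevel hWc hradial _
    have hpK : ∀ t, 0 ≤ t → p t ∈ {x : Fin 3 → ℝ | c pstar - c x ≤ Vf 0} :=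
      fun t ht => hVmono 0 t le_rfl ht
    -- bound on the Hessian term
    have hDgcont : Continuous (fun x : Fin 3 → ℝ => ‖fderiv ℝ gradc x‖) :=
      (hgc2.continuous_fderiv (by norm_num)).norm
    obtain ⟨x₁, hx₁mem, hx₁max⟩ := hK.exists_isMaxOn
      ⟨p 0, by simp only [mem_setOf_eq]; exact le_rfl⟩ hDgcont.continuousOn
    set Hb : ℝ := 3 * ‖fderiv ℝ gradc x₁‖ with hHbdef
    have hHbnn : 0 ≤ Hb := by positivity
    have huu : ∀ t, 0 ≤ t → uvec Q t ⬝ᵥ uvec Q t = 1 := by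
      intro t ht
      have h := congrFun (congrFun (Qorth hhat hsol hgcont t ht) 0) 0
      simpa [Matrix.mul_apply, dotProduct, uvec, Matrix.one_apply,
        Matrix.transpose_apply] using h
    have hunorm : ∀ t, 0 ≤ t → ‖uvec Q t‖ ≤ 1 := by
      intro t ht
      rw [pi_norm_le_iff_of_nonneg zero_le_one]
      intro i
      have h1 : uvec Q t i * uvec Q t i ≤ 1 := by
        rw [← huu t ht, dotProduct]
        exact Finset.single_le_sum (fun j _ => mul_self_nonneg (uvec Q t j))
          (Finset.mem_univ i)
      rw [Real.norm_eq_abs]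
      exact abs_le_one_iff_mul_self_le_one.2 h1
    have hβ : ∀ t, 0 ≤ t →
        |(fderiv ℝ gradc (p t)) (uvec Q t) ⬝ᵥ uvec Q t| ≤ Hb := by
      intro t ht
      have hDu : ∀ i, |(fderiv ℝ gradc (p t)) (uvec Q t) i| ≤ ‖fderiv ℝ gradc x₁‖ := by
        intro i
        calc |(fderiv ℝ gradc (p t)) (uvec Q t) i|
            ≤ ‖(fderiv ℝ gradc (p t)) (uvec Q t)‖ := by
              rw [← Real.norm_eq_abs]; exact norm_le_pi_norm _ i
          _ ≤ ‖fderiv ℝ gradc (p t)‖ * ‖uvec Q t‖ :=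
              (fderiv ℝ gradc (p t)).le_opNorm _
          _ ≤ ‖fderiv ℝ gradc (p t)‖ * 1 :=
              mul_le_mul_of_nonneg_left (hunorm t ht) (norm_nonneg _)
          _ ≤ ‖fderiv ℝ gradc x₁‖ := by
              rw [mul_one]; exact hx₁max (hpK t ht)
      have hui : ∀ i, |uvec Q t i| ≤ 1 := by
        intro i
        have := hunorm t ht
        rw [pi_norm_le_iff_of_nonneg zero_le_one] at this
        simpa [Real.norm_eq_abs] using this i
      rw [dotProduct, Fin.sum_univ_three]
      calc |(fderiv ℝ gradc (p t)) (uvec Q t) 0 * uvec Q t 0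
            + (fderiv ℝ gradc (p t)) (uvec Q t) 1 * uvec Q t 1
            + (fderiv ℝ gradc (p t)) (uvec Q t) 2 * uvec Q t 2|
          ≤ |(fderiv ℝ gradc (p t)) (uvec Q t) 0 * uvec Q t 0|
            + |(fderiv ℝ gradc (p t)) (uvec Q t) 1 * uvec Q t 1|
            + |(fderiv ℝ gradc (p t)) (uvec Q t) 2 * uvec Q t 2| := by
              exact (abs_add_le _ _).trans (by gcongr; exact abs_add_le _ _)
        _ ≤ Hb := by
          rw [abs_mul, abs_mul, abs_mul, hHbdef]
          have h0 := mul_le_mul (hDu 0) (hui 0) (abs_nonneg _) (norm_nonneg _)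
          have h1 := mul_le_mul (hDu 1) (hui 1) (abs_nonneg _) (norm_nonneg _)
          have h2 := mul_le_mul (hDu 2) (hui 2) (abs_nonneg _) (norm_nonneg _)
          rw [mul_one] at h0 h1 h2
          linarith
    -- L = 0
    have hLzero : L = 0 := by
      by_contra hLne
      have hLpos : 0 < L := lt_of_le_of_ne hL0 (Ne.symm hLne)
      have hPpos : 0 < L / κ := div_pos hLpos hκ
      set P := L / κ with hP
      have hgg : ∀ t, 0 ≤ t → P ≤ gradc (p t) ⬝ᵥ gradc (p t) := by
        intro t ht
        have h1 := hPL (p t)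
        have h2 := hLle t ht
        rw [hP, div_le_iff₀ hκ]
        have : Vf t = c pstar - c (p t) := rfl
        nlinarith
      set η := min 1 (P / (8 * (Hb + 1))) with hη
      have hηpos : 0 < η := lt_min one_pos (by positivity)
      have hη1 : η ≤ 1 := min_le_left _ _
      have hηP : η * (Hb + 1) ≤ P / 8 := by
        have h1 : η ≤ P / (8 * (Hb + 1)) := min_le_right _ _
        rw [le_div_iff₀ (by positivity : (0:ℝ) < 8 * (Hb + 1))] at h1
        nlinarith [hHbnn]
      set cc := P / 8 with hcc
      have hccpos : 0 < cc := by positivity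
      have hband : ∀ t, 0 ≤ t → |Af t| ≤ η → df t ≤ -cc := by
        intro t ht habs
        have hβt := hβ t ht
        have h1 : Af t * ((fderiv ℝ gradc (p t)) (uvec Q t) ⬝ᵥ uvec Q t) ≤ η * Hb := by
          calc Af t * _ ≤ |Af t * ((fderiv ℝ gradc (p t)) (uvec Q t) ⬝ᵥ uvec Q t)| :=
                le_abs_self _
            _ = |Af t| * |(fderiv ℝ gradc (p t)) (uvec Q t) ⬝ᵥ uvec Q t| := abs_mul _ _
            _ ≤ η * Hb := mul_le_mul habs hβt (abs_nonneg _) (le_of_lt hηpos)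
        have h2 : (Af t)^2 ≤ η^2 := sq_le_sq' (by linarith [(abs_le.1 habs).1])
          (abs_le.1 habs).2
        have h3 := hgg t ht
        rw [hdf]
        simp only []
        nlinarith
      -- Step A: a eventually dips below η
      have hA : ∃ t₀, 0 ≤ t₀ ∧ Af t₀ ≤ η := by
        by_contra h
        push_neg at h
        set T := (Vf 0 + 1) / η^2 with hT
        have hT0 : 0 ≤ T := div_nonneg (by linarith [hVnn' 0]) (by positivity)
        have hdec := decay_lemma (f := Vf) (d := fun τ => -(Af τ)^2) (m := η^2) hT0
          (fun τ hτ => hVd τ hτ.1)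
          (fun τ hτ => by
            show -(Af τ)^2 ≤ -η^2
            nlinarith [h τ hτ.1, hηpos, sq_nonneg (Af τ - η)])
        have hTeq : η^2 * (T - 0) = Vf 0 + 1 := by
          rw [hT]; field_simp; ring
        nlinarith [hVnn' T]
      obtain ⟨t₀, ht₀, ha₀⟩ := hA
      -- Step B: a stays below η
      have hB : ∀ t, t₀ ≤ t → Af t ≤ η := by
        apply barrier_lemma (d := df)
        · exact fun t ht => hAd t (ht₀.trans ht)
        · intro t ht haη
          have : |Af t| ≤ η := by rw [haη]; rw [abs_of_pos hηpos]
          have := hband t (ht₀.trans ht) this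
          linarith
        · exact ha₀
      -- Step C: a eventually dips below -η
      have hC : ∃ t₁, t₀ ≤ t₁ ∧ Af t₁ ≤ -η := by
        by_contra h
        push_neg at h
        set T := t₀ + (2*η + 1) / cc with hT
        have hTt₀ : t₀ ≤ T := by
          rw [hT]
          have : 0 ≤ (2*η + 1)/cc := by positivity
          linarith
        have hdec := decay_lemma (f := Af) (d := df) (m := cc) hTt₀
          (fun τ hτ => hAd τ (ht₀.trans hτ.1))
          (fun τ hτ => hband τ (ht₀.trans hτ.1)
            (abs_le.2 ⟨by linarith [h τ hτ.1], hB τ hτ.1⟩))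
        have hTeq : cc * (T - t₀) = 2*η + 1 := by
          rw [hT]; field_simp; ring
        have hcon := h T hTt₀
        nlinarith
      obtain ⟨t₁, ht₁0, ha₁⟩ := hC
      have ht₁nn : 0 ≤ t₁ := ht₀.trans ht₁0
      -- Step D: a stays below -η
      have hD : ∀ t, t₁ ≤ t → Af t ≤ -η := by
        apply barrier_lemma (d := df)
        · exact fun t ht => hAd t (ht₁nn.trans ht)
        · intro t ht haη
          have : |Af t| ≤ η := by rw [haη, abs_neg, abs_of_pos hηpos]
          have := hband t (ht₁nn.trans ht) this
          linarith
        · exact ha₁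
      -- Step E: V decays linearly forever, contradiction
      set T := t₁ + (Vf t₁ + 1) / η^2 with hT
      have hTt₁ : t₁ ≤ T := by
        rw [hT]
        have : 0 ≤ (Vf t₁ + 1)/η^2 := div_nonneg (by linarith [hVnn' t₁]) (by positivity)
        linarith
      have hdec := decay_lemma (f := Vf) (d := fun τ => -(Af τ)^2) (m := η^2) hTt₁
        (fun τ hτ => hVd τ (ht₁nn.trans hτ.1))
        (fun τ hτ => by
          show -(Af τ)^2 ≤ -η^2
          nlinarith [hD τ hτ.1, hηpos, sq_nonneg (Af τ + η)])
      have hTeq : η^2 * (T - t₁) = Vf t₁ + 1 := by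
        rw [hT]; field_simp; ring
      nlinarith [hVnn' T]
    -- conclude convergence
    rw [Metric.tendsto_atTop]
    intro ε hε
    by_cases hnex : ({x : Fin 3 → ℝ | c pstar - c x ≤ Vf 0}
        ∩ {x | ε ≤ dist x pstar}).Nonempty
    · obtain ⟨x₀, hx₀mem, hx₀min⟩ :=
        (hK.inter_right (isClosed_le continuous_const
          (continuous_id.dist continuous_const))).exists_isMinOn hnex hWc.continuousOn
      have hmpos : 0 < c pstar - c x₀ := by
        rcases (hWnonneg x₀).lt_or_eq with h | h
        · exact h
        · exfalso
          have hx := hWzero x₀ h.symm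
          have := hx₀mem.2
          rw [hx] at this
          simp only [mem_setOf_eq, id_eq, dist_self] at this
          linarith
      have hsInflt : sInf (Vf '' Ici 0) < c pstar - c x₀ := by
        rw [← hL, hLzero]; exact hmpos
      obtain ⟨y, ⟨t₂, ht₂, rfl⟩, hyl⟩ := exists_lt_of_csInf_lt hne hsInflt
      refine ⟨t₂, fun t ht => ?_⟩
      have h0t : 0 ≤ t := ht₂.trans ht
      have hVt : Vf t ≤ Vf t₂ := hVmono t₂ t ht₂ ht
      by_contra hdist
      push_neg at hdist
      have hptmem : p t ∈ {x : Fin 3 → ℝ | c pstar - c x ≤ Vf 0}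
          ∩ {x | ε ≤ dist x pstar} := ⟨hpK t h0t, hdist⟩
      have := hx₀min hptmem
      simp only [mem_setOf_eq] at this
      have hVfeq : Vf t = c pstar - c (p t) := rfl
      linarith
    · refine ⟨0, fun t ht => ?_⟩
      by_contra hdist
      push_neg at hdist
      exact hnex ⟨p t, hpK t ht, hdist⟩
end

section
/- Let f : ℝⁿ × ℝ → ℝⁿ be continuous, T-periodic in its second argument, with ∫_0^T f(x, s) ds = 0 for all x, and Lipschitz in x with constant L on a compact set K, uniformly in s. Let x : [0, τ_f] → K be Lipschitz with constant εM. Then for any interval [a, a+T] ⊆ [0, τ_f], ‖∫_a^{a+T} f(x(s), s) ds‖ ≤ L M T² ε. -/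
open Set

/-- Per-period averaging estimate: if `f` is continuous, `T`-periodic in `s`, has zero
mean over a period, and is `L`-Lipschitz in `x` on a compact set `K` uniformly in `s`,
and `x : [0,τ_f] → K` is `εM`-Lipschitz, then over any period interval
`[a, a+T] ⊆ [0,τ_f]` one has `‖∫_a^{a+T} f(x(s), s) ds‖ ≤ L M T² ε`. -/
theorem per_period_estimate {n : ℕ} (f : (Fin n → ℝ) → ℝ → Fin n → ℝ)
    (T : ℝ) (hT : 0 < T)
    (hf : Continuous fun q : (Fin n → ℝ) × ℝ => f q.1 q.2)
    (hper : ∀ (x : Fin n → ℝ) (s : ℝ), f x (s + T) = f x s)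
    (hzero : ∀ x : Fin n → ℝ, ∫ s in (0:ℝ)..T, f x s = 0)
    (K : Set (Fin n → ℝ)) (hK : IsCompact K)
    (L : ℝ) (hL : 0 < L)
    (hLip : ∀ s : ℝ, ∀ x ∈ K, ∀ y ∈ K, ‖f x s - f y s‖ ≤ L * ‖x - y‖)
    (τf ε M : ℝ) (hε : 0 < ε) (hM : 0 < M)
    (x : ℝ → Fin n → ℝ) (hxK : ∀ τ ∈ Icc (0:ℝ) τf, x τ ∈ K)
    (hxLip : ∀ τ₁ ∈ Icc (0:ℝ) τf, ∀ τ₂ ∈ Icc (0:ℝ) τf,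
      ‖x τ₁ - x τ₂‖ ≤ ε * M * |τ₁ - τ₂|) :
    ∀ a : ℝ, 0 ≤ a → a + T ≤ τf →
      ‖∫ s in a..(a + T), f (x s) s‖ ≤ L * M * T ^ 2 * ε := by
  intro a ha haT
  have hsub : Icc a (a + T) ⊆ Icc (0:ℝ) τf := by
    intro s hs
    exact ⟨le_trans ha hs.1, le_trans hs.2 haT⟩
  have hamem : a ∈ Icc (0:ℝ) τf := hsub ⟨le_refl a, by linarith⟩
  set c := x a with hc
  -- continuity of x on [0, τf]
  have hxcont : ContinuousOn x (Icc (0:ℝ) τf) := by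
    have : LipschitzOnWith ⟨ε * M, by positivity⟩ x (Icc (0:ℝ) τf) := by
      apply LipschitzOnWith.of_dist_le_mul
      intro p hp q hq
      have := hxLip p hp q hq
      rw [dist_eq_norm, Real.dist_eq]; exact this
    exact this.continuousOn
  have hxcont' : ContinuousOn x (Icc a (a + T)) := hxcont.mono hsub
  -- integrability
  have hcont1 : ContinuousOn (fun s => f (x s) s) (Icc a (a + T)) :=
    hf.comp_continuousOn (f := fun s => (x s, s)) (hxcont'.prodMk continuousOn_id)
  have hcontc : Continuous (fun s => f c s) :=
    hf.comp (continuous_const.prodMk continuous_id)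
  have hab : a ≤ a + T := by linarith
  have hint1 : IntervalIntegrable (fun s => f (x s) s) MeasureTheory.volume a (a + T) :=
    (hcont1.mono (by rw [uIcc_of_le hab])).intervalIntegrable
  have hintc : IntervalIntegrable (fun s => f c s) MeasureTheory.volume a (a + T) :=
    hcontc.intervalIntegrable _ _
  -- the frozen integral vanishes
  have hperc : Function.Periodic (fun s => f c s) T := fun s => hper c s
  have hczero : (∫ s in a..(a + T), f c s) = 0 := by
    have := hperc.intervalIntegral_add_eq a 0
    simpa [hzero c] using this
  -- rewrite the integral
  have hsplit : (∫ s in a..(a + T), f (x s) s)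
      = ∫ s in a..(a + T), (f (x s) s - f c s) := by
    rw [intervalIntegral.integral_sub hint1 hintc, hczero, sub_zero]
  rw [hsplit]
  have hbound : ∀ s ∈ Set.uIoc a (a + T), ‖f (x s) s - f c s‖ ≤ L * (ε * M * T) := by
    intro s hs
    rw [Set.uIoc_of_le hab] at hs
    have hsIcc : s ∈ Icc a (a + T) := ⟨le_of_lt hs.1, hs.2⟩
    have hsmem := hsub hsIcc
    have h1 := hLip s (x s) (hxK s hsmem) c (hxK a hamem)
    have h2 := hxLip s hsmem a hamem
    have h3 : |s - a| ≤ T := by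
      rw [abs_of_nonneg (by linarith [hsIcc.1])]
      linarith [hsIcc.2]
    calc ‖f (x s) s - f c s‖ ≤ L * ‖x s - c‖ := h1
      _ ≤ L * (ε * M * |s - a|) := by
          exact mul_le_mul_of_nonneg_left h2 (le_of_lt hL)
      _ ≤ L * (ε * M * T) := by
          apply mul_le_mul_of_nonneg_left _ (le_of_lt hL)
          exact mul_le_mul_of_nonneg_left h3 (by positivity)
  have := intervalIntegral.norm_integral_le_of_norm_le_const hbound
  have habs : |a + T - a| = T := by
    rw [abs_of_nonneg (by linarith)]; ring
  rw [habs] at this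
  calc ‖∫ s in a..(a + T), (f (x s) s - f c s)‖ ≤ L * (ε * M * T) * T := this
    _ = L * M * T ^ 2 * ε := by ring
end
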